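/- Let W = Σ_{k∈M} ∫_{S_k} e^{A(t₁−τ)} b_k b_kᵀ (e^{A(t₁−τ)})ᵀ dτ where the S_k ⊆ [t₀,t₁) are measurable sets. If W is monomial, then for every x̄ ∈ ℝⁿ₊ the nonnegative control u defined componentwise by u_k(τ) = b_kᵀ (e^{A(t₁−τ)})ᵀ W⁻¹ x̄ for τ ∈ S_k (and 0 otherwise) steers the state of x' = Ax + Bu from x(t₀) = 0 to x(t₁) = x̄. -/

import Mathlib

open scoped Matrix Classical
open MeasureTheory

attribute [local instance] Matrix.linftyOpNormedRing Matrix.linftyOpNormedAlgebra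

/-- A nonnegative square matrix is monomial: each row and each column contains
exactly one strictly positive entry, all other entries being zero. -/
def IsMonomial {n : ℕ} (A : Matrix (Fin n) (Fin n) ℝ) : Prop :=
  (∀ i j, 0 ≤ A i j) ∧ (∀ i, ∃! j, 0 < A i j) ∧ (∀ j, ∃! i, 0 < A i j)

lemma monomial_inv {n : ℕ} {W : Matrix (Fin n) (Fin n) ℝ} (h : IsMonomial W) :
    (∀ i j, 0 ≤ W⁻¹ i j) ∧ W * W⁻¹ = 1 := by
  obtain ⟨hnn, hrow, hcol⟩ := h
  choose σ hσpos hσuniq using hrow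
  have hinj : Function.Injective σ := by
    intro i k hik
    obtain ⟨c, _, hcu⟩ := hcol (σ i)
    have h2 : (0:ℝ) < W k (σ i) := by rw [hik]; exact hσpos k
    exact (hcu i (hσpos i)).trans (hcu k h2).symm
  have hzero : ∀ i j, j ≠ σ i → W i j = 0 := by
    intro i j hj
    rcases (hnn i j).eq_or_lt with h' | h'
    · exact h'.symm
    · exact absurd (hσuniq i j h') hj
  set V : Matrix (Fin n) (Fin n) ℝ := Matrix.of fun j k => if j = σ k then (W k j)⁻¹ else 0
    with hV
  have hVnn : ∀ i j, 0 ≤ V i j := by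
    intro i j
    simp only [hV, Matrix.of_apply]
    split
    · exact inv_nonneg.2 (hnn _ _)
    · exact le_refl 0
  have hWV : W * V = 1 := by
    ext i k
    rw [Matrix.mul_apply, Finset.sum_eq_single (σ k)]
    · simp only [hV, Matrix.of_apply, if_pos rfl]
      by_cases hik : i = k
      · subst hik
        simp [Matrix.one_apply_eq, mul_inv_cancel₀ (hσpos i).ne']
      · have hne : σ k ≠ σ i := fun e => hik (hinj e.symm)
        rw [hzero i (σ k) hne, zero_mul, Matrix.one_apply_ne hik]
    · intro j _ hj
      simp only [hV, Matrix.of_apply, if_neg hj, mul_zero]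
    · intro hmem
      exact absurd (Finset.mem_univ _) hmem
  have hinv : W⁻¹ = V := Matrix.inv_eq_right_inv hWV
  exact ⟨fun i j => hinv ▸ hVnn i j, hinv ▸ hWV⟩

theorem modified_gram_monomial_implies_steering (n m : ℕ)
    (A : Matrix (Fin n) (Fin n) ℝ) (B : Matrix (Fin n) (Fin m) ℝ)
    (hA : ∀ t : ℝ, 0 ≤ t → ∀ i j, 0 ≤ NormedSpace.exp (t • A) i j)
    (hB : ∀ i j, 0 ≤ B i j)
    (t₀ t₁ : ℝ) (ht : t₀ < t₁)
    (M : Finset (Fin m)) (S : Fin m → Set ℝ)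
    (hSmeas : ∀ k, MeasurableSet (S k)) (hSsub : ∀ k, S k ⊆ Set.Ico t₀ t₁)
    (W : Matrix (Fin n) (Fin n) ℝ)
    (hW : ∀ i j, W i j = ∑ k ∈ M, ∫ τ in S k,
      ((NormedSpace.exp ((t₁ - τ) • A)).mulVec fun p => B p k) i *
        ((NormedSpace.exp ((t₁ - τ) • A)).mulVec fun p => B p k) j)
    (hWmono : IsMonomial W) :
    ∀ xbar : Fin n → ℝ, (∀ i, 0 ≤ xbar i) →
      (∀ (k : Fin m) (τ : ℝ), 0 ≤
        (if k ∈ M ∧ τ ∈ S k then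
          (fun p => B p k) ⬝ᵥ (NormedSpace.exp ((t₁ - τ) • A))ᵀ.mulVec (W⁻¹.mulVec xbar)
         else 0)) ∧
      (∫ τ in t₀..t₁, (NormedSpace.exp ((t₁ - τ) • A)).mulVec (B.mulVec fun k =>
          if k ∈ M ∧ τ ∈ S k then
            (fun p => B p k) ⬝ᵥ (NormedSpace.exp ((t₁ - τ) • A))ᵀ.mulVec (W⁻¹.mulVec xbar)
          else 0)) = xbar := by
  intro xbar hxbar
  obtain ⟨hInn, hWW⟩ := monomial_inv hWmono
  -- abbreviations
  set E : ℝ → Matrix (Fin n) (Fin n) ℝ := fun τ => NormedSpace.exp ((t₁ - τ) • A) with hEdef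
  set v : Fin n → ℝ := W⁻¹.mulVec xbar with hvdef
  -- v is nonnegative
  have hvnn : ∀ j, 0 ≤ v j := by
    intro j
    simp only [hvdef, Matrix.mulVec, dotProduct]
    exact Finset.sum_nonneg fun l _ => mul_nonneg (hInn j l) (hxbar l)
  -- entries of E are nonneg on relevant set
  have hEnn : ∀ τ ∈ Set.Ico t₀ t₁, ∀ i j, 0 ≤ E τ i j := by
    intro τ hτ i j
    exact hA (t₁ - τ) (by linarith [hτ.2]) i j
  -- continuity of entries of E
  have hEcont : ∀ i j, Continuous fun τ => E τ i j := by
    intro i j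
    have h1 : Continuous E :=
      NormedSpace.exp_continuous.comp ((continuous_const.sub continuous_id).smul continuous_const)
    exact ((continuous_apply j).comp (continuous_apply i)).comp h1
  -- f k τ = E τ *ᵥ b_k
  set f : Fin m → ℝ → Fin n → ℝ := fun k τ => (E τ).mulVec fun p => B p k with hfdef
  have hfcont : ∀ k i, Continuous fun τ => f k τ i := by
    intro k i
    simp only [hfdef, Matrix.mulVec, dotProduct]
    exact continuous_finset_sum _ fun p _ => (hEcont i p).mul continuous_const
  have hfnn : ∀ k, ∀ τ ∈ Set.Ico t₀ t₁, ∀ i, 0 ≤ f k τ i := by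
    intro k τ hτ i
    simp only [hfdef, Matrix.mulVec, dotProduct]
    exact Finset.sum_nonneg fun p _ => mul_nonneg (hEnn τ hτ i p) (hB p k)
  -- the dot product identity
  have hdot : ∀ (k : Fin m) (τ : ℝ),
      (fun p => B p k) ⬝ᵥ (E τ)ᵀ.mulVec v = f k τ ⬝ᵥ v := by
    intro k τ
    rw [Matrix.mulVec_transpose, dotProduct_comm, ← Matrix.dotProduct_mulVec,
      dotProduct_comm]
  constructor
  · -- nonnegativity of the control
    intro k τ
    split_ifs with h
    · rw [hdot]
      exact Finset.sum_nonneg fun j _ =>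
        mul_nonneg (hfnn k τ (hSsub k h.2) j) (hvnn j)
    · exact le_refl 0
  · -- the steering identity
    -- H k : summand functions
    set H : Fin m → ℝ → Fin n → ℝ := fun k τ i => f k τ i * (f k τ ⬝ᵥ v) with hHdef
    have hHcont : ∀ k, Continuous (H k) := by
      intro k
      apply continuous_pi
      intro i
      exact (hfcont k i).mul (continuous_finset_sum _ fun j _ => (hfcont k j).mul continuous_const)
    -- pointwise identity for the integrand
    have key : ∀ τ : ℝ, (E τ).mulVec (B.mulVec fun k =>
        if k ∈ M ∧ τ ∈ S k then (fun p => B p k) ⬝ᵥ (E τ)ᵀ.mulVec v else 0)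
        = ∑ k ∈ M, Set.indicator (S k) (H k) τ := by
      intro τ
      funext i
      simp only [Matrix.mulVec, dotProduct, Finset.sum_apply]
      simp only [Finset.mul_sum]
      rw [Finset.sum_comm]
      have step : ∀ k' : Fin m, (∑ x : Fin n, E τ i x *
          (B x k' * if k' ∈ M ∧ τ ∈ S k' then
            ∑ p : Fin n, ∑ q : Fin n, B p k' * ((E τ)ᵀ p q * v q) else 0))
          = if k' ∈ M ∧ τ ∈ S k' then H k' τ i else 0 := by
        intro k'
        have hb : (∑ p : Fin n, ∑ q : Fin n, B p k' * ((E τ)ᵀ p q * v q))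
            = f k' τ ⬝ᵥ v := by
          rw [← hdot k' τ]
          simp only [dotProduct, Matrix.mulVec, Finset.mul_sum]
        rw [hb]
        simp only [← mul_assoc, ← Finset.sum_mul]
        have hf : (∑ x : Fin n, E τ i x * B x k') = f k' τ i := rfl
        rw [hf]
        by_cases hP : k' ∈ M ∧ τ ∈ S k'
        · simp [hP, hHdef]
        · simp [hP]
      simp only [step]
      have split : ∀ k' : Fin m, (if k' ∈ M ∧ τ ∈ S k' then H k' τ i else 0)
          = if k' ∈ M then (S k').indicator (fun t => H k' t i) τ else 0 := by
        intro k'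
        by_cases h1 : k' ∈ M <;> by_cases h2 : τ ∈ S k' <;>
          simp [h1, h2, Set.indicator_of_mem, Set.indicator_of_notMem]
      simp only [split]
      rw [Finset.sum_ite_mem, Finset.univ_inter]
      refine Finset.sum_congr rfl fun k _ => ?_
      by_cases h2 : τ ∈ S k <;>
        simp [h2, Set.indicator_of_mem, Set.indicator_of_notMem]
    -- integrability of each summand on Ioc
    have hint : ∀ k : Fin m, Integrable (fun τ => (S k).indicator (H k) τ)
        (volume.restrict (Set.Ioc t₀ t₁)) := by
      intro k
      have h1 : IntegrableOn (H k) (Set.Ioc t₀ t₁) volume := (hHcont k).integrableOn_Ioc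
      exact h1.indicator (hSmeas k)
    -- ae equality of Ioc ∩ S k and S k
    have hae : ∀ k : Fin m, (Set.Ioc t₀ t₁ ∩ S k : Set ℝ) =ᵐ[volume] S k := by
      intro k
      rw [MeasureTheory.ae_eq_set]
      constructor
      · have h0 : (Set.Ioc t₀ t₁ ∩ S k) \ S k = ∅ := by
          ext x
          simp only [Set.mem_diff, Set.mem_inter_iff, Set.mem_empty_iff_false, iff_false,
            not_and]
          tauto
        rw [h0]; exact measure_empty
      · have hsub : S k \ (Set.Ioc t₀ t₁ ∩ S k) ⊆ {t₀} := by
          intro x hx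
          have hxS := hx.1
          have hIco := hSsub k hxS
          have hnot : x ∉ Set.Ioc t₀ t₁ := fun h => hx.2 ⟨h, hxS⟩
          have h1 : ¬ t₀ < x := fun h => hnot ⟨h, hIco.2.le⟩
          have : x = t₀ := le_antisymm (not_lt.1 h1) hIco.1
          simp [this]
        exact measure_mono_null hsub (measure_singleton t₀)
    -- integrability of H k on S k
    have hHint : ∀ k : Fin m, IntegrableOn (H k) (S k) volume := by
      intro k
      exact ((hHcont k).integrableOn_Icc).mono_set
        ((hSsub k).trans Set.Ico_subset_Icc_self)
    have hfpint : ∀ (k : Fin m) (i j : Fin n),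
        IntegrableOn (fun τ => f k τ i * f k τ j) (S k) volume := by
      intro k i j
      exact (((hfcont k i).mul (hfcont k j)).integrableOn_Icc).mono_set
        ((hSsub k).trans Set.Ico_subset_Icc_self)
    -- now compute the integral
    rw [intervalIntegral.integral_of_le ht.le]
    refine (integral_congr_ae (ae_of_all _ fun τ => key τ)).trans ?_
    rw [integral_finset_sum M fun k _ => hint k]
    have hstep2 : ∀ k : Fin m, (∫ τ in Set.Ioc t₀ t₁, (S k).indicator (H k) τ)
        = ∫ τ in S k, H k τ := by
      intro k
      rw [setIntegral_indicator (hSmeas k)]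
      exact setIntegral_congr_set (hae k)
    simp only [hstep2]
    funext i
    rw [Finset.sum_apply]
    have hcomp : ∀ k : Fin m, (∫ τ in S k, H k τ) i
        = ∑ j : Fin n, (∫ τ in S k, f k τ i * f k τ j) * v j := by
      intro k
      have h1 : (∫ τ in S k, H k τ) i = ∫ τ in S k, H k τ i :=
        ((ContinuousLinearMap.proj i : (Fin n → ℝ) →L[ℝ] ℝ).integral_comp_comm
          (hHint k)).symm
      rw [h1]
      have h2 : ∀ τ : ℝ, H k τ i = ∑ j : Fin n, (f k τ i * f k τ j) * v j := by
        intro τ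
        simp only [hHdef, dotProduct, Finset.mul_sum, mul_assoc]
      simp only [h2]
      rw [integral_finset_sum Finset.univ fun j _ => (hfpint k i j).mul_const (v j)]
      exact Finset.sum_congr rfl fun j _ => integral_mul_const _ _
    simp only [hcomp]
    rw [Finset.sum_comm]
    simp only [← Finset.sum_mul]
    have hWv : ∀ j : Fin n, (∑ k ∈ M, ∫ τ in S k, f k τ i * f k τ j) = W i j := by
      intro j
      rw [hW i j]
    simp only [hWv]
    have hfin : W.mulVec v = xbar := by
      rw [hvdef, Matrix.mulVec_mulVec, hWW, Matrix.one_mulVec]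
    calc (∑ j : Fin n, W i j * v j) = W.mulVec v i := rfl
      _ = xbar i := by rw [hfin]
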